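/- Assume λ = 0, δ > 1 and P > 0, and for each ρ > 0 let (β*(ρ), τ*(ρ)) be the unique saddle point of max_{β ≥ 0} min_{τ > 0} D(β,τ) with parameter ρ. Then, as ρ → 0⁺, the ratio τ*(ρ)/(√ρ/√(δ − 1)) converges to 1 and the ratio β*(ρ)/(2√ρ·√(δ − 1)) converges to 1. -/

import Mathlib

open MeasureTheory ProbabilityTheory Filter

noncomputable section

/-- Standard Gaussian `N(0,1)` measure on `ℝ`. -/
def stdGaussian : Measure ℝ := ProbabilityTheory.gaussianReal 0 1

/-- `Yfun P lam β τ = (β/α)·(E[(H − √P·α)²·1{H ≥ √P·α}] − 1/2)` with `α = 1/τ + 2λ/β`. -/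
def Yfun (P lam β τ : ℝ) : ℝ :=
  (β / (1 / τ + 2 * lam / β)) *
    ((∫ h in Set.Ici (Real.sqrt P * (1 / τ + 2 * lam / β)),
        (h - Real.sqrt P * (1 / τ + 2 * lam / β)) ^ 2 ∂stdGaussian) - 1 / 2)

/-- `D(β,τ) = τβδ/2 + ρβ/(2τ) − β²/4 + Y(β,τ)`, with the convention `D(0,τ) = 0`. -/
def Dfun (δ ρ P lam β τ : ℝ) : ℝ :=
  if β = 0 then 0
  else τ * β * δ / 2 + ρ * β / (2 * τ) - β ^ 2 / 4 + Yfun P lam β τ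

/-- `(βs, τs)` is a saddle point of `max_{β ≥ 0} min_{τ > 0} D(β, τ)`:
`D(β,τs) ≤ D(βs,τs) ≤ D(βs,τ)` for all `β ≥ 0` and `τ > 0`. -/
def IsSaddle (δ ρ P lam βs τs : ℝ) : Prop :=
  0 ≤ βs ∧ 0 < τs ∧
  (∀ β, 0 ≤ β → Dfun δ ρ P lam β τs ≤ Dfun δ ρ P lam βs τs) ∧
  (∀ τ, 0 < τ → Dfun δ ρ P lam βs τs ≤ Dfun δ ρ P lam βs τ)

end

noncomputable section Helpers

open Real

instance : IsProbabilityMeasure stdGaussian := by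
  unfold _root_.stdGaussian; infer_instance

lemma integrable_abs_pow_stdGaussian (n : ℕ) :
    Integrable (fun x : ℝ => |x| ^ n) stdGaussian := by
  rw [_root_.stdGaussian, gaussianReal_of_var_ne_zero _ one_ne_zero,
    integrable_withDensity_iff (measurable_gaussianPDF 0 1)
      (ae_of_all _ fun x => ENNReal.ofReal_lt_top)]
  have hpdf : ∀ x : ℝ, ((gaussianPDF 0 1 x).toReal) = gaussianPDFReal 0 1 x := by
    intro x
    rw [gaussianPDF, ENNReal.toReal_ofReal (gaussianPDFReal_nonneg 0 1 x)]
  have base := (integrable_rpow_mul_exp_neg_mul_sq (b := 1/2) (by norm_num)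
    (s := (n : ℝ)) (by exact lt_of_lt_of_le neg_one_lt_zero (Nat.cast_nonneg n))).abs
  have : ∀ x : ℝ, |x ^ ((n : ℝ)) * Real.exp (-(1/2) * x ^ 2)|
      = |x| ^ n * Real.exp (-(1/2) * x ^ 2) := by
    intro x
    rw [abs_mul, abs_of_pos (Real.exp_pos _), Real.rpow_natCast, abs_pow]
  rw [funext this] at base
  refine ((base.const_mul ((Real.sqrt (2 * Real.pi * 1))⁻¹)).congr ?_)
  filter_upwards with x
  rw [hpdf x, gaussianPDFReal]
  have harg : -(x - 0) ^ 2 / (2 * (1:ℝ)) = -(1/2) * x ^ 2 := by ring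
  push_cast
  rw [harg]
  ring


lemma integrable_id_stdGaussian : Integrable (fun x : ℝ => x) stdGaussian := by
  refine Integrable.mono' (g := fun x : ℝ => |x| ^ 1) (by simpa using integrable_abs_pow_stdGaussian 1)
    measurable_id.aestronglyMeasurable (ae_of_all _ fun x => ?_)
  simp [Real.norm_eq_abs]

lemma integrable_sq_stdGaussian : Integrable (fun x : ℝ => x ^ 2) stdGaussian := by
  simpa [sq_abs] using integrable_abs_pow_stdGaussian 2

lemma integrable_shift_stdGaussian (a : ℝ) :
    Integrable (fun x : ℝ => (x - a) ^ 2) stdGaussian := by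
  have h : (fun x : ℝ => (x - a) ^ 2) = fun x => (x ^ 2 - 2 * a * x) + a ^ 2 :=
    funext fun x => by ring
  rw [h]
  exact (integrable_sq_stdGaussian.sub (integrable_id_stdGaussian.const_mul (2 * a))).add
    (integrable_const _)

noncomputable def Gint (a : ℝ) : ℝ := ∫ x in Set.Ici a, (x - a) ^ 2 ∂stdGaussian

lemma Gint_nonneg (a : ℝ) : 0 ≤ Gint a :=
  setIntegral_nonneg measurableSet_Ici (fun _ _ => sq_nonneg _)

lemma Gint_le (a : ℝ) (ha : 0 < a) : Gint a ≤ (∫ x, |x| ^ 3 ∂stdGaussian) / a := by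
  have h1 : Gint a ≤ ∫ x in Set.Ici a, |x| ^ 3 / a ∂stdGaussian := by
    refine setIntegral_mono_on (integrable_shift_stdGaussian a).integrableOn
      ((integrable_abs_pow_stdGaussian 3).div_const a).integrableOn measurableSet_Ici ?_
    intro x hx
    have hx' : a ≤ x := hx
    have hxp : 0 < x := lt_of_lt_of_le ha hx'
    rw [abs_of_pos hxp, le_div_iff₀ ha]
    have e1 : (x - a) ^ 2 ≤ x ^ 2 := by nlinarith
    have e2 : x ^ 2 * a ≤ x ^ 3 := by nlinarith
    nlinarith
  have h2 : ∫ x in Set.Ici a, |x| ^ 3 / a ∂stdGaussian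
      ≤ (∫ x, |x| ^ 3 ∂stdGaussian) / a := by
    rw [integral_div, div_le_div_iff_of_pos_right ha]
    exact setIntegral_le_integral (integrable_abs_pow_stdGaussian 3)
      (ae_of_all _ fun x => by positivity)
  exact h1.trans h2

lemma Gint_tendsto : Tendsto Gint atTop (nhds 0) := by
  set C : ℝ := ∫ x, |x| ^ 3 ∂stdGaussian with hC
  have hdiv : Tendsto (fun a : ℝ => C / a) atTop (nhds 0) :=
    Tendsto.div_atTop tendsto_const_nhds tendsto_id
  refine tendsto_of_tendsto_of_tendsto_of_le_of_le' (g := fun _ => (0:ℝ))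
    (h := fun a => C / a) tendsto_const_nhds hdiv
    (Eventually.of_forall Gint_nonneg) ?_
  filter_upwards [eventually_gt_atTop (0 : ℝ)] with a ha
  exact Gint_le a ha

noncomputable def Ffun (δ ρ P τ : ℝ) : ℝ :=
  τ * δ / 2 + ρ / (2 * τ) - τ / 2 + τ * Gint (Real.sqrt P / τ)

lemma Dfun_eq (δ ρ P β τ : ℝ) (hβ : β ≠ 0) :
    Dfun δ ρ P 0 β τ = β * Ffun δ ρ P τ - β ^ 2 / 4 := by
  simp only [Dfun, Yfun, Ffun, Gint, if_neg hβ]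
  have h0 : 1 / τ + 2 * (0:ℝ) / β = 1 / τ := by simp
  rw [h0]
  have h1 : Real.sqrt P * (1 / τ) = Real.sqrt P / τ := mul_one_div _ _
  rw [h1]
  have h2 : β / (1 / τ) = β * τ := by
    rw [div_div_eq_mul_div, div_one]
  rw [h2]
  ring

lemma Ffun_lower {δ ρ τ : ℝ} (P : ℝ) (hδ : 1 < δ) (hρ : 0 < ρ) (hτ : 0 < τ) :
    Real.sqrt ρ * Real.sqrt (δ - 1) ≤ Ffun δ ρ P τ := by
  have hG : 0 ≤ τ * Gint (Real.sqrt P / τ) := mul_nonneg hτ.le (Gint_nonneg _)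
  have hd : (0:ℝ) < δ - 1 := by linarith
  have hsd := Real.sq_sqrt hd.le
  have hsr := Real.sq_sqrt hρ.le
  have key : Real.sqrt ρ * Real.sqrt (δ - 1) ≤ τ * δ / 2 + ρ / (2 * τ) - τ / 2 := by
    have hE : 2 * τ * (τ * δ / 2 + ρ / (2 * τ) - τ / 2) = τ ^ 2 * δ + ρ - τ ^ 2 := by
      field_simp
    have h3 : 2 * τ * (Real.sqrt ρ * Real.sqrt (δ - 1)) ≤ τ ^ 2 * δ + ρ - τ ^ 2 := by
      nlinarith [sq_nonneg (τ * Real.sqrt (δ - 1) - Real.sqrt ρ)]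
    have h4 : 2 * τ * (Real.sqrt ρ * Real.sqrt (δ - 1))
        ≤ 2 * τ * (τ * δ / 2 + ρ / (2 * τ) - τ / 2) := by rw [hE]; exact h3
    exact le_of_mul_le_mul_left h4 (by positivity)
  unfold Ffun
  linarith

lemma Ffun_at_tau0 {δ ρ : ℝ} (P : ℝ) (hδ : 1 < δ) (hρ : 0 < ρ) :
    Ffun δ ρ P (Real.sqrt ρ / Real.sqrt (δ - 1))
      = Real.sqrt ρ * Real.sqrt (δ - 1)
        + (Real.sqrt ρ / Real.sqrt (δ - 1)) *
            Gint (Real.sqrt P / (Real.sqrt ρ / Real.sqrt (δ - 1))) := by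
  have hd : (0:ℝ) < δ - 1 := by linarith
  have ha : 0 < Real.sqrt ρ := Real.sqrt_pos.mpr hρ
  have hb : 0 < Real.sqrt (δ - 1) := Real.sqrt_pos.mpr hd
  unfold Ffun
  set a := Real.sqrt ρ with hadef
  set b := Real.sqrt (δ - 1) with hbdef
  have hρ' : ρ = a ^ 2 := (Real.sq_sqrt hρ.le).symm
  have hδ' : δ = b ^ 2 + 1 := by rw [hbdef, Real.sq_sqrt hd.le]; ring
  rw [hρ', hδ']
  field_simp
  ring

lemma saddle_props {δ ρ P βv τv : ℝ} (hδ : 1 < δ) (hρ : 0 < ρ)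
    (hsad : IsSaddle δ ρ P 0 βv τv) :
    βv = 2 * Ffun δ ρ P τv ∧ 0 < τv ∧
      ∀ τ, 0 < τ → Ffun δ ρ P τv ≤ Ffun δ ρ P τ := by
  obtain ⟨hβ0, hτ0, hmax, hmin⟩ := hsad
  have hd : (0:ℝ) < δ - 1 := by linarith
  have hspos : 0 < Real.sqrt ρ * Real.sqrt (δ - 1) := by
    exact mul_pos (Real.sqrt_pos.mpr hρ) (Real.sqrt_pos.mpr hd)
  have hFpos : 0 < Ffun δ ρ P τv := lt_of_lt_of_le hspos (Ffun_lower P hδ hρ hτ0)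
  have hval : Dfun δ ρ P 0 (2 * Ffun δ ρ P τv) τv = Ffun δ ρ P τv ^ 2 := by
    rw [Dfun_eq _ _ _ _ _ (by positivity)]; ring
  have h1 := hmax (2 * Ffun δ ρ P τv) (by positivity)
  rw [hval] at h1
  have hβne : βv ≠ 0 := by
    intro h
    rw [h] at h1
    norm_num [Dfun] at h1
    nlinarith
  have hβeq : βv = 2 * Ffun δ ρ P τv := by
    rw [Dfun_eq _ _ _ _ _ hβne] at h1
    nlinarith [sq_nonneg (βv - 2 * Ffun δ ρ P τv)]
  refine ⟨hβeq, hτ0, fun τ hτ => ?_⟩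
  have h2 := hmin τ hτ
  rw [Dfun_eq _ _ _ _ _ hβne, Dfun_eq _ _ _ _ _ hβne] at h2
  have hβpos : 0 < βv := by rw [hβeq]; positivity
  have h3 : βv * Ffun δ ρ P τv ≤ βv * Ffun δ ρ P τ := by linarith
  exact le_of_mul_le_mul_left h3 hβpos

lemma key_bounds {δ P : ℝ} (hδ : 1 < δ) (hP : 0 < P) {βv τv ρ : ℝ} (hρ : 0 < ρ)
    (hsad : IsSaddle δ ρ P 0 βv τv) :
    1 ≤ βv / (2 * Real.sqrt ρ * Real.sqrt (δ - 1)) ∧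
    βv / (2 * Real.sqrt ρ * Real.sqrt (δ - 1))
      ≤ 1 + Gint (Real.sqrt P / (Real.sqrt ρ / Real.sqrt (δ - 1))) / (δ - 1) ∧
    (τv / (Real.sqrt ρ / Real.sqrt (δ - 1)) - 1) ^ 2
      ≤ 2 * (Gint (Real.sqrt P / (Real.sqrt ρ / Real.sqrt (δ - 1))) / (δ - 1)) *
        (2 + 2 * (Gint (Real.sqrt P / (Real.sqrt ρ / Real.sqrt (δ - 1))) / (δ - 1))) := by
  obtain ⟨hβeq, hτv, hminF⟩ := saddle_props hδ hρ hsad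
  have hd : (0:ℝ) < δ - 1 := by linarith
  set r := Real.sqrt ρ with hrdef
  set b := Real.sqrt (δ - 1) with hbdef
  have hr : 0 < r := Real.sqrt_pos.mpr hρ
  have hb : 0 < b := Real.sqrt_pos.mpr hd
  have hr2 : r ^ 2 = ρ := Real.sq_sqrt hρ.le
  have hb2 : b ^ 2 = δ - 1 := Real.sq_sqrt hd.le
  set ε := Gint (Real.sqrt P / (r / b)) with hεdef
  have hε : 0 ≤ ε := Gint_nonneg _
  -- F bounds
  have hFlow : r * b ≤ Ffun δ ρ P τv := Ffun_lower P hδ hρ hτv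
  have hFup : Ffun δ ρ P τv ≤ r * b + (r / b) * ε := by
    have := hminF (r / b) (by positivity)
    rwa [Ffun_at_tau0 P hδ hρ] at this
  constructor
  · rw [hβeq, le_div_iff₀ (by positivity)]
    nlinarith
  constructor
  · rw [hβeq, div_le_iff₀ (by positivity)]
    have : (1 + ε / (δ - 1)) * (2 * r * b) = 2 * (r * b + (r / b) * ε) := by
      rw [← hb2]; field_simp
    rw [this]; linarith
  -- τ bound
  · have hLup : τv * (δ - 1) / 2 + ρ / (2 * τv) ≤ r * b + (r / b) * ε := by
      have hGn : 0 ≤ τv * Gint (Real.sqrt P / τv) := mul_nonneg hτv.le (Gint_nonneg _)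
      have : Ffun δ ρ P τv = τv * (δ - 1) / 2 + ρ / (2 * τv)
          + τv * Gint (Real.sqrt P / τv) := by unfold Ffun; ring
      linarith [hFup, this ▸ hFup]
    -- multiply by 2 τv
    have hL2 : τv ^ 2 * (δ - 1) + ρ ≤ 2 * τv * (r * b) + 2 * τv * (r / b) * ε := by
      have h2τ : 0 < 2 * τv := by positivity
      have := mul_le_mul_of_nonneg_left hLup h2τ.le
      have hcan : 2 * τv * (τv * (δ - 1) / 2 + ρ / (2 * τv))
          = τv ^ 2 * (δ - 1) + ρ := by field_simp
      rw [hcan] at this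
      linarith
    set x := τv / (r / b) with hxdef
    set e := ε / (δ - 1) with hedef
    have hx : 0 < x := by positivity
    have he : 0 ≤ e := div_nonneg hε hd.le
    have hq : x ^ 2 + 1 ≤ (2 + 2 * e) * x := by
      have h5 : (τv ^ 2 * (δ - 1) + ρ) / r ^ 2
          ≤ (2 * τv * (r * b) + 2 * τv * (r / b) * ε) / r ^ 2 :=
        (div_le_div_iff_of_pos_right (by positivity)).mpr hL2
      have hLHS : (τv ^ 2 * (δ - 1) + ρ) / r ^ 2 = x ^ 2 + 1 := by
        rw [hxdef, ← hr2, ← hb2]; field_simp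
      have hRHS : (2 * τv * (r * b) + 2 * τv * (r / b) * ε) / r ^ 2
          = (2 + 2 * e) * x := by
        rw [hxdef, hedef, ← hb2]; field_simp
      rw [hLHS, hRHS] at h5
      exact h5
    have hxle : x ≤ 2 + 2 * e := by nlinarith
    nlinarith

end Helpers

/-- for `λ = 0` and `δ > 1`, as `ρ → 0⁺`, `τ*(ρ)/(√ρ/√(δ−1)) → 1` and
`β*(ρ)/(2√ρ·√(δ−1)) → 1`. -/
theorem saddle_point_limit_rho_zero_ZF (δ P : ℝ)
    (hδ : 1 < δ) (hP : 0 < P)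
    (βs τs : ℝ → ℝ)
    (hsad : ∀ ρ : ℝ, 0 < ρ → IsSaddle δ ρ P 0 (βs ρ) (τs ρ)) :
    Tendsto (fun ρ => τs ρ / (Real.sqrt ρ / Real.sqrt (δ - 1)))
      (nhdsWithin 0 (Set.Ioi 0)) (nhds 1) ∧
    Tendsto (fun ρ => βs ρ / (2 * Real.sqrt ρ * Real.sqrt (δ - 1)))
      (nhdsWithin 0 (Set.Ioi 0)) (nhds 1) := by
  have hd : (0:ℝ) < δ - 1 := by linarith
  set E : ℝ → ℝ :=
    fun ρ => Gint (Real.sqrt P / (Real.sqrt ρ / Real.sqrt (δ - 1))) / (δ - 1) with hEdef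
  have hεlim : Tendsto E (nhdsWithin 0 (Set.Ioi 0)) (nhds 0) := by
    have hsqrt : Tendsto (fun ρ : ℝ => Real.sqrt ρ)
        (nhdsWithin 0 (Set.Ioi 0)) (nhdsWithin 0 (Set.Ioi 0)) := by
      apply tendsto_nhdsWithin_of_tendsto_nhds_of_eventually_within
      · exact (Real.continuous_sqrt.tendsto' 0 0 Real.sqrt_zero).mono_left nhdsWithin_le_nhds
      · filter_upwards [self_mem_nhdsWithin] with ρ hρ
        exact Real.sqrt_pos.mpr hρ
    have hinv : Tendsto (fun y : ℝ => y⁻¹) (nhdsWithin 0 (Set.Ioi 0)) atTop :=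
      tendsto_inv_nhdsGT_zero
    have hconst : Tendsto (fun y : ℝ => (Real.sqrt P * Real.sqrt (δ - 1)) * y⁻¹)
        (nhdsWithin 0 (Set.Ioi 0)) atTop := by
      apply Tendsto.const_mul_atTop (by positivity) hinv
    have harg : Tendsto (fun ρ : ℝ => Real.sqrt P / (Real.sqrt ρ / Real.sqrt (δ - 1)))
        (nhdsWithin 0 (Set.Ioi 0)) atTop := by
      refine (hconst.comp hsqrt).congr fun ρ => ?_
      simp only [Function.comp]
      rw [div_div_eq_mul_div, div_eq_mul_inv]
    have := (Gint_tendsto.comp harg).div_const (δ - 1)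
    simpa using this
  have hqlim : Tendsto (fun ρ => 2 * E ρ * (2 + 2 * E ρ))
      (nhdsWithin 0 (Set.Ioi 0)) (nhds 0) := by
    have := ((hεlim.const_mul 2).mul ((hεlim.const_mul 2).const_add 2))
    simpa using this
  have hhlim : Tendsto (fun ρ => Real.sqrt (2 * E ρ * (2 + 2 * E ρ)))
      (nhdsWithin 0 (Set.Ioi 0)) (nhds 0) := by
    have := (Real.continuous_sqrt.tendsto' 0 0 Real.sqrt_zero).comp hqlim
    exact this
  constructor
  · refine tendsto_of_tendsto_of_tendsto_of_le_of_le'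
      (g := fun ρ => 1 - Real.sqrt (2 * E ρ * (2 + 2 * E ρ)))
      (h := fun ρ => 1 + Real.sqrt (2 * E ρ * (2 + 2 * E ρ)))
      (by simpa using tendsto_const_nhds.sub hhlim)
      (by simpa using tendsto_const_nhds.add hhlim) ?_ ?_
    · filter_upwards [self_mem_nhdsWithin] with ρ hρ
      have hk := (key_bounds hδ hP hρ (hsad ρ hρ)).2.2
      have h1 := Real.sqrt_le_sqrt hk
      rw [Real.sqrt_sq_eq_abs] at h1
      have := (abs_le.mp h1).1
      simp only [hEdef]
      linarith
    · filter_upwards [self_mem_nhdsWithin] with ρ hρ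
      have hk := (key_bounds hδ hP hρ (hsad ρ hρ)).2.2
      have h1 := Real.sqrt_le_sqrt hk
      rw [Real.sqrt_sq_eq_abs] at h1
      have := (abs_le.mp h1).2
      simp only [hEdef]
      linarith
  · refine tendsto_of_tendsto_of_tendsto_of_le_of_le'
      (g := fun _ => (1:ℝ)) (h := fun ρ => 1 + E ρ)
      tendsto_const_nhds (by simpa using tendsto_const_nhds.add hεlim) ?_ ?_
    · filter_upwards [self_mem_nhdsWithin] with ρ hρ
      exact (key_bounds hδ hP hρ (hsad ρ hρ)).1
    · filter_upwards [self_mem_nhdsWithin] with ρ hρ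
      exact (key_bounds hδ hP hρ (hsad ρ hρ)).2.1
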